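/- Let {N_i : i ∈ ℕ} be a strictly decreasing chain of sets in an l-base B of a topological space X with ⋂_{i=1}^∞ N_i ∈ B. Let α = {X, ⋂_{i=1}^∞ N_i} ∪ {N_i : i ∈ ℕ} and U_α(x) = ⋂{M ∈ α : x ∈ M}. Then for every A ⊆ X, the set U_α(A) = ⋃_{a ∈ A} U_α(a) is a finite union of members of α, hence belongs to B. -/
import Mathlib


/-- The transitive neighbornet associated with a cover `α`:
`UofCover α x = ⋂ {M ∈ α : x ∈ M}`. -/
def UofCover {X : Type*} (α : Set (Set X)) (x : X) : Set X :=
  ⋂₀ {M | M ∈ α ∧ x ∈ M}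

/-- `α` is an interior preserving open cover: an open cover all of whose
subfamilies have open intersection. -/
def IsIPOpenCover {X : Type*} [TopologicalSpace X] (α : Set (Set X)) : Prop :=
  (∀ M ∈ α, IsOpen M) ∧ ⋃₀ α = Set.univ ∧ ∀ β ⊆ α, IsOpen (⋂₀ β)

/-- An l-base: a base of the topology closed under finite unions and finite
intersections and containing `∅` and `X`. -/
def IsLBase {X : Type*} [TopologicalSpace X] (B : Set (Set X)) : Prop :=
  TopologicalSpace.IsTopologicalBasis B ∧
  (∀ M ∈ B, ∀ N ∈ B, M ∪ N ∈ B) ∧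
  (∀ M ∈ B, ∀ N ∈ B, M ∩ N ∈ B) ∧
  ∅ ∈ B ∧ (Set.univ : Set X) ∈ B

/-- For a strictly decreasing chain `(N i)` in an l-base `B` with `⋂ i, N i ∈ B`, and
`α = {X, ⋂ i, N i} ∪ {N i : i ∈ ℕ}`, the set `U_α(A)` is a finite union of members of
`α`, hence belongs to `B`, for every `A ⊆ X`. -/
theorem UofCover_antichain_mem_lbase {X : Type*} [TopologicalSpace X]
    (B : Set (Set X)) (hB : IsLBase B) (N : ℕ → Set X) (hNB : ∀ i, N i ∈ B)
    (hmono : ∀ i, N (i + 1) ⊂ N i) (hI : (⋂ i, N i) ∈ B) :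
    ∀ A : Set X,
      (∃ β : Set (Set X), β.Finite ∧
          β ⊆ insert Set.univ (insert (⋂ i, N i) (Set.range N)) ∧
          (⋃ a ∈ A, UofCover (insert Set.univ (insert (⋂ i, N i) (Set.range N))) a)
            = ⋃₀ β) ∧
      (⋃ a ∈ A, UofCover (insert Set.univ (insert (⋂ i, N i) (Set.range N))) a) ∈ B := by
  classical
  obtain ⟨hbase, hcup, hcap, hempty, huniv⟩ := hB
  set α : Set (Set X) := insert Set.univ (insert (⋂ i, N i) (Set.range N)) with hα
  have hanti : ∀ i j : ℕ, i ≤ j → N j ⊆ N i := fun i j h =>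
    antitone_nat_of_succ_le (fun n => (hmono n).1) h
  -- trichotomy for values of UofCover
  have htri : ∀ x : X, UofCover α x = Set.univ ∨ UofCover α x = (⋂ i, N i) ∨
      ∃ k, UofCover α x = N k := by
    intro x
    by_cases h1 : ∀ i, x ∈ N i
    · right; left
      apply subset_antisymm
      · exact Set.sInter_subset_of_mem ⟨by simp [hα], by simpa using h1⟩
      · intro y hy M hM
        obtain ⟨hMα, hxM⟩ := hM
        simp only [hα, Set.mem_insert_iff, Set.mem_range] at hMα
        rcases hMα with rfl | rfl | ⟨k, rfl⟩
        · trivial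
        · exact hy
        · exact Set.mem_iInter.1 hy k
    · push_neg at h1
      have hfind := Nat.find_spec h1
      rcases hk : Nat.find h1 with _ | m
      · left
        apply subset_antisymm (Set.subset_univ _)
        intro y _ M hM
        obtain ⟨hMα, hxM⟩ := hM
        simp only [hα, Set.mem_insert_iff, Set.mem_range] at hMα
        rcases hMα with rfl | rfl | ⟨k, rfl⟩
        · trivial
        · exact absurd (Set.mem_iInter.1 hxM (Nat.find h1)) hfind
        · exact absurd (hanti 0 k (Nat.zero_le k) hxM) (hk ▸ hfind)
      · right; right
        refine ⟨m, subset_antisymm ?_ ?_⟩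
        · exact Set.sInter_subset_of_mem
            ⟨by simp [hα], not_not.1 (Nat.find_min h1 (by omega))⟩
        · intro y hy M hM
          obtain ⟨hMα, hxM⟩ := hM
          simp only [hα, Set.mem_insert_iff, Set.mem_range] at hMα
          rcases hMα with rfl | rfl | ⟨k, rfl⟩
          · trivial
          · exact absurd (Set.mem_iInter.1 hxM (Nat.find h1)) hfind
          · have hkm : k ≤ m := by
              by_contra hc
              exact hfind (hanti (Nat.find h1) k (by omega) hxM)
            exact hanti k m hkm hy
  intro A
  rcases A.eq_empty_or_nonempty with rfl | ⟨a1, ha1⟩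
  · refine ⟨⟨∅, Set.finite_empty, Set.empty_subset _, by simp⟩, by simpa using hempty⟩
  · have key : ∃ a0 ∈ A, ∀ a ∈ A, UofCover α a ⊆ UofCover α a0 := by
      by_cases hu : ∃ a ∈ A, UofCover α a = Set.univ
      · obtain ⟨a0, ha0, he⟩ := hu
        exact ⟨a0, ha0, fun a _ => he ▸ Set.subset_univ _⟩
      · push_neg at hu
        by_cases hn : ∃ k, ∃ a ∈ A, UofCover α a = N k
        · obtain ⟨a0, ha0, he0⟩ := Nat.find_spec hn
          refine ⟨a0, ha0, fun a ha => ?_⟩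
          rcases htri a with h | h | ⟨k, h⟩
          · exact absurd h (hu a ha)
          · rw [h, he0]; exact Set.iInter_subset N (Nat.find hn)
          · rw [h, he0]; exact hanti _ _ (Nat.find_min' hn ⟨a, ha, h⟩)
        · push_neg at hn
          refine ⟨a1, ha1, fun a ha => ?_⟩
          rcases htri a with h | h | ⟨k, h⟩
          · exact absurd h (hu a ha)
          · rcases htri a1 with h1 | h1 | ⟨k1, h1⟩
            · exact absurd h1 (hu a1 ha1)
            · rw [h, h1]
            · exact absurd h1 (hn k1 a1 ha1)
          · exact absurd h (hn k a ha)
    obtain ⟨a0, ha0, hmax⟩ := key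
    have hUeq : (⋃ a ∈ A, UofCover α a) = UofCover α a0 :=
      subset_antisymm (Set.iUnion₂_subset hmax) (Set.subset_biUnion_of_mem ha0)
    have hUα : UofCover α a0 ∈ α := by
      rcases htri a0 with h | h | ⟨k, h⟩ <;> rw [h]
      · exact Set.mem_insert _ _
      · exact Set.mem_insert_of_mem _ (Set.mem_insert _ _)
      · exact Set.mem_insert_of_mem _ (Set.mem_insert_of_mem _ ⟨k, rfl⟩)
    refine ⟨⟨{UofCover α a0}, Set.finite_singleton _, by simpa using hUα,
      by rw [hUeq]; simp⟩, ?_⟩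
    rw [hUeq]
    rcases htri a0 with h | h | ⟨k, h⟩ <;> rw [h]
    · exact huniv
    · exact hI
    · exact hNB k
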